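/- For all real f < 0, K > 0, τ > 0: 4Kτ(1 − f)/(π·(1 − 2f)^{1/2}·(2f² − 5f + 2)) < 2Kτ/π. -/
import Mathlib


open Real

theorem stmt_10 : ∀ f K τ : ℝ, f < 0 → K > 0 → τ > 0 →
    4 * K * τ * (1 - f) / (π * Real.sqrt (1 - 2 * f) * (2 * f ^ 2 - 5 * f + 2)) <
      2 * K * τ / π := by
  intro f K τ hf hK hτ
  have hπ : (0:ℝ) < π := Real.pi_pos
  set s := Real.sqrt (1 - 2 * f) with hs
  have hs1 : 1 ≤ s := by
    nlinarith [Real.sq_sqrt (show (0:ℝ) ≤ 1 - 2 * f by linarith),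
      Real.sqrt_nonneg (1 - 2 * f)]
  have hQ : 0 < 2 * f ^ 2 - 5 * f + 2 := by nlinarith
  have hden : 0 < π * s * (2 * f ^ 2 - 5 * f + 2) := by positivity
  rw [div_lt_div_iff₀ hden hπ]
  have hkey : 2 * (1 - f) < s * (2 * f ^ 2 - 5 * f + 2) := by nlinarith
  nlinarith [mul_pos hK hτ, mul_pos (mul_pos hK hτ) hπ,
    mul_lt_mul_of_pos_left hkey (mul_pos (mul_pos hK hτ) hπ)]
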